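/- Suppose α is irrational of bounded type (its partial quotients are bounded) and β ∉ ℤα + ℤ. Then there exist c > 0 and a strictly increasing sequence (n_k) such that for every k and every integer j with 0 ≤ |j| ≤ q_{n_k}, one has ‖β − jα‖ ≥ c/q_{n_k}. -/

import Mathlib

/-- Denominators of the continued fraction convergents of a real number. -/
noncomputable def contDen (α : ℝ) (n : ℕ) : ℝ := (GenContFract.of α).dens n

/-- Distance from a real number to the nearest integer. -/
noncomputable def nint (x : ℝ) : ℝ := |x - (round x : ℝ)|

/-- `α` is of bounded type: the partial quotients in its continued fraction expansion
are bounded. -/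
def BoundedType (α : ℝ) : Prop :=
  ∃ M : ℝ, ∀ n : ℕ, ∀ b : ℝ, (GenContFract.of α).partDens.get? n = some b → b ≤ M

/-- Membership in the subgroup ℤα + ℤ of ℝ. -/
def InZalphaZ (α β : ℝ) : Prop := ∃ m k : ℤ, β = (m : ℝ) * α + (k : ℝ)

open GenContFract

section MyAux
variable {α : ℝ}

lemma myNotTerm (hα : Irrational α) (n : ℕ) : ¬ (GenContFract.of α).TerminatedAt n := by
  intro h
  rcases (GenContFract.terminates_iff_rat α).mp ⟨n, h⟩ with ⟨q, hq⟩
  exact hα ⟨q, hq.symm⟩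

lemma myDenOne (n : ℕ) : (1:ℝ) ≤ (GenContFract.of α).dens n := by
  induction n with
  | zero => simp [GenContFract.zeroth_den_eq_one]
  | succ n ih => exact ih.trans GenContFract.of_den_mono

lemma myDenPos (n : ℕ) : (0:ℝ) < (GenContFract.of α).dens n :=
  lt_of_lt_of_le one_pos (myDenOne n)

lemma myDenMono : Monotone (fun n => (GenContFract.of α).dens n) :=
  monotone_nat_of_le_succ (fun _ => GenContFract.of_den_mono)

lemma myStreamSome (hα : Irrational α) (n : ℕ) :
    ∃ ifp : IntFractPair ℝ, IntFractPair.stream α n = some ifp ∧ ifp.fr ≠ 0 := by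
  have h := myNotTerm hα n
  rw [GenContFract.of_terminatedAt_n_iff_succ_nth_intFractPair_stream_eq_none] at h
  obtain ⟨ifp_succ, h⟩ := Option.ne_none_iff_exists'.mp h
  obtain ⟨ifp, h1, h2, -⟩ := GenContFract.IntFractPair.succ_nth_stream_eq_some_iff.mp h
  exact ⟨ifp, h1, h2⟩

lemma myContsAuxBLe (n : ℕ) :
    ((GenContFract.of α).contsAux n).b ≤ (GenContFract.of α).dens n := by
  cases n with
  | zero =>
    simp [GenContFract.zeroth_contAux_eq_one_zero, GenContFract.zeroth_den_eq_one]
  | succ n =>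
    have h : (GenContFract.of α).dens n = ((GenContFract.of α).contsAux (n+1)).b := by
      rw [GenContFract.den_eq_conts_b, GenContFract.nth_cont_eq_succ_nth_contAux]
    rw [← h]
    exact GenContFract.of_den_mono


-- recurrence with floor of fr inverse
lemma myKey (hα : Irrational α) (n : ℕ) :
    ∃ ifp : IntFractPair ℝ, IntFractPair.stream α n = some ifp ∧ 0 < ifp.fr ∧
      (GenContFract.of α).s.get? n = some ⟨1, ((⌊ifp.fr⁻¹⌋ : ℤ) : ℝ)⟩ ∧
      (GenContFract.of α).dens (n+1)
        = ((⌊ifp.fr⁻¹⌋ : ℤ) : ℝ) * (GenContFract.of α).dens n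
            + ((GenContFract.of α).contsAux n).b ∧
      α - (GenContFract.of α).convs n
        = (-1)^n / ((GenContFract.of α).dens n *
            (ifp.fr⁻¹ * (GenContFract.of α).dens n + ((GenContFract.of α).contsAux n).b)) := by
  obtain ⟨ifp, hst, hfr⟩ := myStreamSome hα n
  have hfr0 : 0 < ifp.fr :=
    lt_of_le_of_ne (GenContFract.IntFractPair.nth_stream_fr_nonneg hst) (Ne.symm hfr)
  have hsucc : IntFractPair.stream α (n+1) = some (IntFractPair.of ifp.fr⁻¹) :=
    GenContFract.IntFractPair.stream_succ_of_some hst hfr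
  have hs : (GenContFract.of α).s.get? n = some ⟨1, ((⌊ifp.fr⁻¹⌋ : ℤ) : ℝ)⟩ :=
    GenContFract.get?_of_eq_some_of_succ_get?_intFractPair_stream hsucc
  refine ⟨ifp, hst, hfr0, hs, ?_, ?_⟩
  · -- recurrence
    have hrec := GenContFract.contsAux_recurrence hs rfl rfl
    have h1 : (GenContFract.of α).dens (n+1) = ((GenContFract.of α).contsAux (n+2)).b := by
      rw [GenContFract.den_eq_conts_b, GenContFract.nth_cont_eq_succ_nth_contAux]
    have h2 : (GenContFract.of α).dens n = ((GenContFract.of α).contsAux (n+1)).b := by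
      rw [GenContFract.den_eq_conts_b, GenContFract.nth_cont_eq_succ_nth_contAux]
    rw [h1, hrec, h2]
    simp
  · -- error formula
    have tmp := GenContFract.sub_convs_eq hst
    simp only [hfr0.ne', if_false, ite_false] at tmp
    have h2 : ((GenContFract.of α).contsAux (n+1)).b = (GenContFract.of α).dens n := by
      rw [GenContFract.den_eq_conts_b, GenContFract.nth_cont_eq_succ_nth_contAux]
    rw [tmp, h2]


lemma myErr (hα : Irrational α) (n : ℕ) :
    ∃ D : ℝ, (GenContFract.of α).dens (n+1) ≤ D ∧
      D ≤ (GenContFract.of α).dens (n+1) + (GenContFract.of α).dens n ∧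
      (GenContFract.of α).dens n * α - (GenContFract.of α).nums n = (-1)^n / D := by
  obtain ⟨ifp, hst, hfr0, hs, hrec, hform⟩ := myKey hα n
  set B := (GenContFract.of α).dens n with hB
  set pB := ((GenContFract.of α).contsAux n).b with hpB
  have hB1 : (1:ℝ) ≤ B := myDenOne (α := α) n
  have hB0 : (0:ℝ) < B := lt_of_lt_of_le one_pos hB1
  refine ⟨ifp.fr⁻¹ * B + pB, ?_, ?_, ?_⟩
  · rw [hrec]
    have : ((⌊ifp.fr⁻¹⌋ : ℤ) : ℝ) ≤ ifp.fr⁻¹ := Int.floor_le _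
    nlinarith
  · rw [hrec]
    have : ifp.fr⁻¹ < ((⌊ifp.fr⁻¹⌋ : ℤ) : ℝ) + 1 := Int.lt_floor_add_one _
    nlinarith
  · have hconv : (GenContFract.of α).convs n = (GenContFract.of α).nums n / B :=
      GenContFract.conv_eq_num_div_den
    have := hform
    rw [hconv] at this
    have h2 : B * (α - (GenContFract.of α).nums n / B) = B * α - (GenContFract.of α).nums n := by
      field_simp
    have hpB0 : (0:ℝ) ≤ pB := GenContFract.zero_le_of_contsAux_b
    have hD : (0:ℝ) < ifp.fr⁻¹ * B + pB := by
      have : 0 < ifp.fr⁻¹ := inv_pos.mpr hfr0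
      nlinarith
    rw [← h2, this]
    rw [eq_div_iff hD.ne']
    field_simp

lemma myInt (hα : Irrational α) (n : ℕ) :
    (∃ a : ℤ, (GenContFract.of α).nums n = (a:ℝ)) ∧
    (∃ b : ℤ, (GenContFract.of α).dens n = (b:ℝ)) := by
  have key : ∀ m : ℕ,
      ((∃ a : ℤ, (GenContFract.of α).nums m = (a:ℝ)) ∧
       (∃ b : ℤ, (GenContFract.of α).dens m = (b:ℝ))) ∧
      ((∃ a : ℤ, (GenContFract.of α).nums (m+1) = (a:ℝ)) ∧
       (∃ b : ℤ, (GenContFract.of α).dens (m+1) = (b:ℝ))) := by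
    intro m
    induction m with
    | zero =>
      obtain ⟨ifp, -, -, hs, -, -⟩ := myKey hα 0
      constructor
      · constructor
        · exact ⟨⌊α⌋, by rw [GenContFract.zeroth_num_eq_h, GenContFract.of_h_eq_floor]⟩
        · exact ⟨1, by rw [GenContFract.zeroth_den_eq_one]; norm_num⟩
      · constructor
        · refine ⟨⌊ifp.fr⁻¹⌋ * ⌊α⌋ + 1, ?_⟩
          rw [GenContFract.first_num_eq hs, GenContFract.of_h_eq_floor]
          push_cast
          ring
        · exact ⟨⌊ifp.fr⁻¹⌋, by rw [GenContFract.first_den_eq hs]⟩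
    | succ m ih =>
      refine ⟨ih.2, ?_⟩
      obtain ⟨ifp, -, -, hs, -, -⟩ := myKey hα (m+1)
      obtain ⟨⟨⟨a0, ha0⟩, ⟨b0, hb0⟩⟩, ⟨⟨a1, ha1⟩, ⟨b1, hb1⟩⟩⟩ := ih
      constructor
      · refine ⟨⌊ifp.fr⁻¹⌋ * a1 + a0, ?_⟩
        rw [GenContFract.nums_recurrence hs rfl rfl, ha0, ha1]
        push_cast
        ring
      · refine ⟨⌊ifp.fr⁻¹⌋ * b1 + b0, ?_⟩
        rw [GenContFract.dens_recurrence hs rfl rfl, hb0, hb1]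
        push_cast
        ring
  exact (key n).1

lemma myDet (hα : Irrational α) (n : ℕ) :
    (GenContFract.of α).nums n * (GenContFract.of α).dens (n+1)
      - (GenContFract.of α).dens n * (GenContFract.of α).nums (n+1) = (-1)^(n+1) :=
  SimpContFract.determinant (s := SimpContFract.of α) (myNotTerm hα n)

lemma myDensUnbounded (hα : Irrational α) (C : ℝ) : ∃ n, C < (GenContFract.of α).dens n := by
  set N := max 4 ⌈C⌉₊ with hN
  refine ⟨N, ?_⟩
  have h1 : (Nat.fib (N+1) : ℝ) ≤ (GenContFract.of α).dens N :=
    GenContFract.succ_nth_fib_le_of_nth_den (Or.inr (myNotTerm hα _))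
  have h2 : N + 1 ≤ Nat.fib (N+1) := Nat.le_fib_self (by omega)
  have h3 : C ≤ (⌈C⌉₊ : ℝ) := Nat.le_ceil C
  have h4 : (⌈C⌉₊ : ℝ) < (Nat.fib (N+1) : ℝ) := by
    have : ⌈C⌉₊ < N + 1 := by omega
    exact_mod_cast lt_of_lt_of_le this (by exact_mod_cast h2)
  linarith

lemma myGrowth (hα : Irrational α) {M : ℝ}
    (hM : ∀ n : ℕ, ∀ b : ℝ, (GenContFract.of α).partDens.get? n = some b → b ≤ M) (n : ℕ) :
    (GenContFract.of α).dens (n+1) ≤ (M+1) * (GenContFract.of α).dens n := by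
  obtain ⟨ifp, -, -, hs, hrec, -⟩ := myKey hα n
  have hb : ((⌊ifp.fr⁻¹⌋ : ℤ) : ℝ) ≤ M :=
    hM n _ (GenContFract.partDen_eq_s_b hs)
  have h1 := myContsAuxBLe (α := α) n
  have h2 := myDenOne (α := α) n
  rw [hrec]
  nlinarith

lemma myHomog (hα : Irrational α) {M : ℝ} (hM1 : 1 ≤ M)
    (hM : ∀ n : ℕ, ∀ b : ℝ, (GenContFract.of α).partDens.get? n = some b → b ≤ M) :
    ∀ m p : ℤ, 0 < m → 1/((M+2) * (m:ℝ)) ≤ |(m:ℝ) * α - (p:ℝ)| := by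
  intro m p hm
  have hmR : (1:ℝ) ≤ (m:ℝ) := by exact_mod_cast hm
  obtain ⟨n, hlow, hhigh⟩ : ∃ n, (GenContFract.of α).dens n ≤ (m:ℝ) ∧
      (m:ℝ) < (GenContFract.of α).dens (n+1) := by
    classical
    have hex : ∃ N, ((m:ℝ)) < (GenContFract.of α).dens N := myDensUnbounded hα m
    have hspec := Nat.find_spec hex
    cases h : Nat.find hex with
    | zero =>
      rw [h, GenContFract.zeroth_den_eq_one] at hspec
      linarith
    | succ n =>
      refine ⟨n, ?_, by rwa [h] at hspec⟩
      by_contra hc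
      exact Nat.find_min hex (m := n) (by omega) (by linarith)
  obtain ⟨⟨an, han⟩, ⟨bn, hbn⟩⟩ := myInt hα n
  obtain ⟨⟨an1, han1⟩, ⟨bn1, hbn1⟩⟩ := myInt hα (n+1)
  have hdd : (an * bn1 - bn * an1) * (an * bn1 - bn * an1) = 1 := by
    have hdR : ((an * bn1 - bn * an1 : ℤ) : ℝ) = (-1:ℝ)^(n+1) := by
      push_cast
      rw [← han, ← hbn, ← han1, ← hbn1]
      exact myDet hα n
    have : (((an * bn1 - bn * an1) * (an * bn1 - bn * an1) : ℤ) : ℝ) = 1 := by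
      rw [Int.cast_mul, hdR, ← pow_add]
      exact Even.neg_one_pow ⟨n+1, by ring⟩
    exact_mod_cast this
  obtain ⟨x, hxdef⟩ : ∃ x : ℤ, x = (an * bn1 - bn * an1) * (bn1 * p - an1 * m) := ⟨_, rfl⟩
  obtain ⟨y, hydef⟩ : ∃ y : ℤ, y = (an * bn1 - bn * an1) * (an * m - bn * p) := ⟨_, rfl⟩
  have hx : x * an + y * an1 = p := by
    rw [hxdef, hydef]
    linear_combination p * hdd
  have hy : x * bn + y * bn1 = m := by
    rw [hxdef, hydef]
    linear_combination m * hdd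
  -- error terms
  obtain ⟨Dn, hDna, hDnb, hEn⟩ := myErr hα n
  obtain ⟨Dn1, hDn1a, hDn1b, hEn1⟩ := myErr hα (n+1)
  have hDnpos : (0:ℝ) < Dn := lt_of_lt_of_le (lt_of_lt_of_le one_pos (myDenOne (α := α) (n+1))) hDna
  have hDn1pos : (0:ℝ) < Dn1 := lt_of_lt_of_le (lt_of_lt_of_le one_pos (myDenOne (α := α) (n+2))) hDn1a
  -- real identity
  have hxR : (x:ℝ) * (an:ℝ) + (y:ℝ) * (an1:ℝ) = (p:ℝ) := by exact_mod_cast hx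
  have hyR : (x:ℝ) * (bn:ℝ) + (y:ℝ) * (bn1:ℝ) = (m:ℝ) := by exact_mod_cast hy
  have hreal : (m:ℝ) * α - p = (x:ℝ) * ((-1:ℝ)^n/Dn) + (y:ℝ) * ((-1:ℝ)^(n+1)/Dn1) := by
    rw [← hEn, ← hEn1, ← hxR, ← hyR, ← han, ← hbn, ← han1, ← hbn1]
    ring
  have habs : |(m:ℝ) * α - p| = |(x:ℝ)/Dn - (y:ℝ)/Dn1| := by
    have h2 : (x:ℝ) * ((-1:ℝ)^n/Dn) + (y:ℝ) * ((-1:ℝ)^(n+1)/Dn1)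
        = (-1:ℝ)^n * ((x:ℝ)/Dn - (y:ℝ)/Dn1) := by
      rw [pow_succ]
      ring
    rw [hreal, h2, abs_mul, abs_pow, abs_neg, abs_one, one_pow, one_mul]
  -- integer inequalities
  have hbn1m : m < bn1 := by exact_mod_cast hbn1 ▸ hhigh
  have hbnm : bn ≤ m := by exact_mod_cast hbn ▸ hlow
  have hbn1' : 1 ≤ bn := by
    have := myDenOne (α := α) n
    rw [hbn] at this
    exact_mod_cast this
  have hbn11' : 1 ≤ bn1 := by omega
  rcases eq_or_ne x 0 with hx0 | hx0
  · exfalso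
    rw [hx0, zero_mul, zero_add] at hy
    rcases lt_trichotomy y 0 with hy0 | hy0 | hy0
    · nlinarith
    · rw [hy0] at hy; omega
    · nlinarith
  · have hxy : x * y ≤ 0 := by
      by_contra hc
      push_neg at hc
      rcases lt_trichotomy x 0 with hxneg | hx0' | hxpos
      · have hyneg : y < 0 := by nlinarith
        nlinarith
      · exact hx0 hx0'
      · have hypos : 0 < y := by nlinarith
        nlinarith
    have hbound : 1/Dn ≤ |(x:ℝ)/Dn - (y:ℝ)/Dn1| := by
      rcases lt_trichotomy x 0 with hxneg | hx0' | hxpos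
      · have hy0 : 0 ≤ y := by nlinarith
        have hxR' : (x:ℝ) ≤ -1 := by exact_mod_cast (by omega : x ≤ -1)
        have hyR' : (0:ℝ) ≤ (y:ℝ) := by exact_mod_cast hy0
        have : (x:ℝ)/Dn - (y:ℝ)/Dn1 ≤ -(1/Dn) := by
          have h1 : (x:ℝ)/Dn ≤ -(1/Dn) := by
            have := (div_le_div_iff_of_pos_right hDnpos).mpr hxR'
            rwa [neg_div] at this
          have h2 : (0:ℝ) ≤ (y:ℝ)/Dn1 := by positivity
          linarith
        calc 1/Dn ≤ -((x:ℝ)/Dn - (y:ℝ)/Dn1) := by linarith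
          _ ≤ |(x:ℝ)/Dn - (y:ℝ)/Dn1| := neg_le_abs _
      · exact absurd hx0' hx0
      · have hy0 : y ≤ 0 := by nlinarith
        have hxR' : (1:ℝ) ≤ (x:ℝ) := by exact_mod_cast hxpos
        have hyR' : (y:ℝ) ≤ 0 := by exact_mod_cast hy0
        have : 1/Dn ≤ (x:ℝ)/Dn - (y:ℝ)/Dn1 := by
          have h1 : 1/Dn ≤ (x:ℝ)/Dn := (div_le_div_iff_of_pos_right hDnpos).mpr hxR' 
          have h2 : (y:ℝ)/Dn1 ≤ 0 := div_nonpos_of_nonpos_of_nonneg hyR' hDn1pos.le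
          linarith
        exact this.trans (le_abs_self _)
    -- final chain
    have hgrow : (GenContFract.of α).dens (n+1) ≤ (M+1) * (GenContFract.of α).dens n :=
      myGrowth hα hM n
    have hDnle : Dn ≤ (M+2) * (m:ℝ) := by
      have h4 : Dn ≤ (M+2) * (GenContFract.of α).dens n := by linarith
      have h5 : (M+2) * (GenContFract.of α).dens n ≤ (M+2) * (m:ℝ) :=
        mul_le_mul_of_nonneg_left hlow (by linarith)
      linarith
    have h3 : 1/((M+2) * (m:ℝ)) ≤ 1/Dn := by
      apply one_div_le_one_div_of_le hDnpos hDnle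
    rw [habs]
    linarith

lemma myNintNonneg (x : ℝ) : 0 ≤ nint x := abs_nonneg _

lemma myNintLe (x : ℝ) (z : ℤ) : nint x ≤ |x - (z:ℝ)| := round_le x z

lemma myNintSub (a b : ℝ) : nint (a - b) ≤ nint a + nint b := by
  have h := myNintLe (a - b) (round a - round b)
  rw [Int.cast_sub] at h
  calc nint (a - b) ≤ |a - b - ((round a : ℝ) - (round b : ℝ))| := h
    _ = |(a - round a) - (b - round b)| := by ring_nf
    _ ≤ |a - (round a : ℝ)| + |b - (round b : ℝ)| := abs_sub _ _
    _ = nint a + nint b := rfl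

lemma myHomogNint (hα : Irrational α) {M : ℝ} (hM1 : 1 ≤ M)
    (hM : ∀ n : ℕ, ∀ b : ℝ, (GenContFract.of α).partDens.get? n = some b → b ≤ M)
    (m : ℤ) (hm : m ≠ 0) : 1/((M+2) * |(m:ℝ)|) ≤ nint ((m:ℝ) * α) := by
  rcases lt_or_gt_of_ne hm with hneg | hpos
  · have h := myHomog hα hM1 hM (-m) (-(round ((m:ℝ)*α))) (by omega)
    have habs : |(m:ℝ)| = ((-m : ℤ) : ℝ) := by
      rw [abs_of_neg (by exact_mod_cast hneg)]
      push_cast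
      ring
    rw [habs]
    refine h.trans (le_of_eq ?_)
    unfold nint
    push_cast
    rw [← abs_neg]
    ring_nf
  · have h := myHomog hα hM1 hM m (round ((m:ℝ)*α)) hpos
    have habs : |(m:ℝ)| = (m:ℝ) := abs_of_pos (by exact_mod_cast hpos)
    rw [habs]
    exact h

lemma myMain (hα : Irrational α) {M : ℝ} (hM1 : 1 ≤ M)
    (hM : ∀ n : ℕ, ∀ b : ℝ, (GenContFract.of α).partDens.get? n = some b → b ≤ M)
    {β : ℝ} (hβ : ¬ InZalphaZ α β) (N : ℕ) :
    ∃ n, N ≤ n ∧ ∀ j : ℤ, |(j:ℝ)| ≤ (GenContFract.of α).dens n →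
      (1/(2*(M+2)^2)) / (GenContFract.of α).dens n ≤ nint (β - (j:ℝ) * α) := by
  have hM2 : (0:ℝ) < M + 2 := by linarith
  by_contra hcon
  push_neg at hcon
  choose j hj1 hj2 using fun k : ℕ => hcon (N + k) (Nat.le_add_right N k)
  have hdpos : ∀ n : ℕ, (0:ℝ) < (GenContFract.of α).dens n :=
    fun n => lt_of_lt_of_le one_pos (myDenOne (α := α) n)
  have hconst : ∀ k, j k = j 0 := by
    intro k
    induction k with
    | zero => rfl
    | succ k ih =>
      rw [← ih]
      by_contra hne
      have hmne : j k - j (k+1) ≠ 0 := fun h => hne (by omega)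
      set D := (GenContFract.of α).dens (N + k) with hD
      have hD1 : (GenContFract.of α).dens (N + (k+1)) = (GenContFract.of α).dens ((N+k)+1) := by
        rfl
      have hDle : (GenContFract.of α).dens (N + (k+1)) ≤ (M+1) * D :=
        hD1 ▸ myGrowth hα hM (N+k)
      have hDmono : D ≤ (GenContFract.of α).dens (N + (k+1)) :=
        myDenMono (α := α) (by omega)
      -- nint bound
      have h1 : nint (((j k - j (k+1) : ℤ) : ℝ) * α)
          ≤ nint (β - (j (k+1) : ℝ) * α) + nint (β - (j k : ℝ) * α) := by
        have heq : ((j k - j (k+1) : ℤ) : ℝ) * α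
            = (β - (j (k+1) : ℝ) * α) - (β - (j k : ℝ) * α) := by
          push_cast
          ring
        rw [heq]
        exact myNintSub _ _
      have h2 : nint (β - (j (k+1) : ℝ) * α) < (1/(2*(M+2)^2)) / D := by
        refine lt_of_lt_of_le (hj2 (k+1)) ?_
        apply div_le_div_of_nonneg_left _ (hdpos _) hDmono
        positivity
      have h3 : nint (β - (j k : ℝ) * α) < (1/(2*(M+2)^2)) / D := hj2 k
      -- size of m
      have h4 : |((j k - j (k+1) : ℤ) : ℝ)| ≤ (M+2) * D := by
        push_cast
        calc |(j k : ℝ) - (j (k+1) : ℝ)| ≤ |(j k : ℝ)| + |(j (k+1) : ℝ)| := abs_sub _ _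
          _ ≤ D + (M+1) * D := add_le_add (hj1 k) ((hj1 (k+1)).trans hDle)
          _ = (M+2) * D := by ring
      have h5 := myHomogNint hα hM1 hM _ hmne
      have h6 : 1/((M+2) * ((M+2) * D)) ≤ 1/((M+2) * |((j k - j (k+1) : ℤ) : ℝ)|) := by
        apply one_div_le_one_div_of_le
        · have : (1:ℝ) ≤ |((j k - j (k+1) : ℤ) : ℝ)| := by
            exact_mod_cast Int.one_le_abs hmne
          nlinarith
        · exact mul_le_mul_of_nonneg_left h4 hM2.le
      have hD0 : D ≠ 0 := (hdpos _).ne'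
      have hM20 : (M+2) ≠ 0 := hM2.ne'
      have heq2 : 1/((M+2) * ((M+2) * D)) = 2 * ((1/(2*(M+2)^2)) / D) := by
        field_simp
      linarith
  -- so nint (β - j 0 α) < c / dens (N+k) for all k
  have hsmall : ∀ k : ℕ, nint (β - (j 0 : ℝ) * α) < (1/(2*(M+2)^2)) / (GenContFract.of α).dens (N + k) := by
    intro k
    have := hj2 k
    rwa [hconst k] at this
  have hzero : nint (β - (j 0 : ℝ) * α) = 0 := by
    by_contra hne
    have hpos : 0 < nint (β - (j 0 : ℝ) * α) := lt_of_le_of_ne (myNintNonneg _) (Ne.symm hne)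
    obtain ⟨n, hn⟩ := myDensUnbounded hα ((1/(2*(M+2)^2)) / nint (β - (j 0 : ℝ) * α))
    have hmono : (GenContFract.of α).dens n ≤ (GenContFract.of α).dens (N + n) :=
      myDenMono (α := α) (Nat.le_add_left n N)
    have h7 : (1/(2*(M+2)^2)) / (GenContFract.of α).dens (N + n) < nint (β - (j 0 : ℝ) * α) := by
      rw [div_lt_iff₀ (hdpos _)]
      rw [div_lt_iff₀ hpos] at hn
      calc (1/(2*(M+2)^2)) < (GenContFract.of α).dens n * nint (β - (j 0 : ℝ) * α) := hn
        _ ≤ (GenContFract.of α).dens (N+n) * nint (β - (j 0 : ℝ) * α) :=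
            mul_le_mul_of_nonneg_right hmono hpos.le
        _ = nint (β - (j 0 : ℝ) * α) * (GenContFract.of α).dens (N+n) := by ring
    exact absurd (hsmall n) (not_lt.mpr h7.le)
  apply hβ
  have : β - (j 0 : ℝ) * α = (round (β - (j 0 : ℝ) * α) : ℝ) := by
    have := abs_eq_zero.mp hzero
    linarith
  exact ⟨j 0, round (β - (j 0 : ℝ) * α), by linarith⟩

end MyAux

theorem stmt9 (α : ℝ) (hα : Irrational α) (hα01 : α ∈ Set.Ioo (0:ℝ) 1)
    (hbdd : BoundedType α) (β : ℝ) (hβ : ¬ InZalphaZ α β) :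
    ∃ c > (0:ℝ), ∃ nk : ℕ → ℕ, StrictMono nk ∧
      ∀ k : ℕ, ∀ j : ℤ, (|j| : ℝ) ≤ contDen α (nk k) →
        nint (β - (j : ℝ) * α) ≥ c / contDen α (nk k) := by
  obtain ⟨M₀, hM₀⟩ := hbdd
  have hM1 : (1:ℝ) ≤ max M₀ 1 := le_max_right _ _
  have hM : ∀ n : ℕ, ∀ b : ℝ, (GenContFract.of α).partDens.get? n = some b → b ≤ max M₀ 1 :=
    fun n b h => (hM₀ n b h).trans (le_max_left _ _)
  have hc : (0:ℝ) < 1/(2*(max M₀ 1 + 2)^2) := by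
    apply div_pos one_pos
    nlinarith
  refine ⟨1/(2*(max M₀ 1 + 2)^2), hc, ?_⟩
  choose g hg1 hg2 using myMain hα hM1 hM hβ
  refine ⟨fun k => Nat.rec (g 0) (fun _ prev => g (prev + 1)) k, ?_, ?_⟩
  · apply strictMono_nat_of_lt_succ
    intro k
    show (Nat.rec (g 0) (fun _ prev => g (prev + 1)) k : ℕ)
      < g ((Nat.rec (g 0) (fun _ prev => g (prev + 1)) k : ℕ) + 1)
    have := hg1 ((Nat.rec (g 0) (fun _ prev => g (prev + 1)) k : ℕ) + 1)
    omega
  · intro k jj hjle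
    have hP : ∀ j : ℤ, |(j:ℝ)| ≤ (GenContFract.of α).dens
        (Nat.rec (g 0) (fun _ prev => g (prev + 1)) k : ℕ) →
        (1/(2*(max M₀ 1 + 2)^2)) / (GenContFract.of α).dens
          (Nat.rec (g 0) (fun _ prev => g (prev + 1)) k : ℕ)
          ≤ nint (β - (j:ℝ) * α) := by
      cases k with
      | zero => exact hg2 0
      | succ k => exact hg2 _
    exact hP jj hjle
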